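/- In the simplicial setup, let N₀ ⊂ N₁ ∪ N₂ be a subset obtained by repeatedly removing any element divisible by another element, so that no element of N₀ divides another and N₀ still generates in_≺(ker π); for n = x^μ y^ν ∈ N₀ with associated b = Σμ_[i]a_i + Σν_[i]e_i ∈ B, set g_n := n − m_b. Then G = {g_n : n ∈ N₀} is the reduced Gröbner basis of ker π with respect to the graded reverse lexicographic order: G is a Gröbner basis, each initial term has coefficient 1, and for every g ∈ G no term of any g' ∈ G \ {g} is divisible by in_≺(g). -/

import Mathlib

namespace SimplicialToric

/-- `eVec d α i` is `α` times the `i`-th standard basis vector of `ℕ^d`. -/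
def eVec (d α : ℕ) (i : Fin d) : Fin d → ℕ := fun j => if j = i then α else 0

/-- The Hilbert basis of a submonoid `B ⊆ ℕ^d`: the set of irreducible elements
(in `ℕ^d` the only unit is `0`). -/
def Hilb {d : ℕ} (B : AddSubmonoid (Fin d → ℕ)) : Set (Fin d → ℕ) :=
  {b | b ∈ B ∧ b ≠ 0 ∧ ∀ x ∈ B, ∀ y ∈ B, b = x + y → x = 0 ∨ y = 0}

/-- The submonoid `A = Σᵢ ℤ≥0·eᵢ = αℤ≥0^d`. -/
def Amon (d α : ℕ) : AddSubmonoid (Fin d → ℕ) :=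
  AddSubmonoid.closure (Set.range (eVec d α))

/-- `B_A = {x ∈ B : x − a ∉ B for every a ∈ A \ {0}}`. -/
def BA {d : ℕ} (B : AddSubmonoid (Fin d → ℕ)) (α : ℕ) : Set (Fin d → ℕ) :=
  {x | x ∈ B ∧ ∀ z ∈ Amon d α, z ≠ 0 → ∀ y ∈ B, x ≠ y + z}

/-- The generators `a₁,…,a_c,e₁,…,e_d` of `B`, indexed by the variables of
`S = K[x₁,…,x_c,y₁,…,y_d]`; variable `Fin.castAdd d i` is `xᵢ`, variable
`Fin.natAdd c j` is `yⱼ`. -/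
def gens (c d α : ℕ) (a : Fin c → Fin d → ℕ) : Fin (c + d) → Fin d → ℕ :=
  Fin.addCases a (eVec d α)

/-- The element of `B` represented by the monomial with exponent vector `σ`:
`π(x^μ y^ν) = t^(valE σ)`. -/
def valE (c d α : ℕ) (a : Fin c → Fin d → ℕ) (σ : Fin (c + d) →₀ ℕ) : Fin d → ℕ :=
  ∑ v : Fin (c + d), σ v • gens c d α a v

/-- total degree of a monomial (exponent vector). -/
def degE {N : ℕ} (σ : Fin N →₀ ℕ) : ℕ := ∑ v, σ v

/-- the graded reverse lexicographic order: `grevlex σ τ` means `σ ≺ τ`,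
i.e. `deg σ < deg τ`, or degrees agree and the last nonzero entry of `τ − σ`
is negative. -/
def grevlex {N : ℕ} (σ τ : Fin N →₀ ℕ) : Prop :=
  degE σ < degE τ ∨ (degE σ = degE τ ∧ ∃ k, τ k < σ k ∧ ∀ l, k < l → σ l = τ l)

/-- `x ∼ y` iff `x − y ∈ gp(A) = αℤ^d`. -/
def Rel {d : ℕ} (α : ℕ) (x y : Fin d → ℕ) : Prop :=
  ∀ j, (α : ℤ) ∣ (x j : ℤ) - (y j : ℤ)

/-- `Γ` is an equivalence class of `B_A` modulo `αℤ^d`. -/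
def IsClass {d : ℕ} (B : AddSubmonoid (Fin d → ℕ)) (α : ℕ) (Γ : Set (Fin d → ℕ)) : Prop :=
  ∃ x ∈ BA B α, Γ = {y | y ∈ BA B α ∧ Rel α x y}

/-- the total order on an equivalence class of `B_A`: `b ≺ c` iff the last
nonzero entry of `b − c` is negative. -/
def ltCls {d : ℕ} (x y : Fin d → ℕ) : Prop :=
  ∃ k, x k < y k ∧ ∀ l, k < l → x l = y l

/-- `joinSub x y = x∨y − y`, where `x∨y` is the componentwise maximum. -/
def joinSub {d : ℕ} (x y : Fin d → ℕ) : Fin d → ℕ := fun j => max (x j) (y j) - y j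

/-- the monomial with exponents `σ` lies in `T = K[y₁,…,y_d]`. -/
def yOnly (c d : ℕ) (σ : Fin (c + d) →₀ ℕ) : Prop := ∀ i : Fin c, σ (Fin.castAdd d i) = 0

/-- the monomial with exponents `σ` involves only the `x`-variables. -/
def xOnly (c d : ℕ) (σ : Fin (c + d) →₀ ℕ) : Prop := ∀ j : Fin d, σ (Fin.natAdd c j) = 0

/-- the set `N₁`, for a given choice `m` of the minimal monomials `m_b`. -/
def N1set (c d α : ℕ) (a : Fin c → Fin d → ℕ) (B : AddSubmonoid (Fin d → ℕ))
    (m : (Fin d → ℕ) → (Fin (c + d) →₀ ℕ)) : Set (Fin (c + d) →₀ ℕ) :=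
  {n | ∃ (i : Fin c) (b : Fin d → ℕ), b ∈ BA B α ∧
    n = Finsupp.single (Fin.castAdd d i) 1 + m b ∧ n ≠ m (a i + b)}

/-- the set `N₂ = ∪_Γ N_Γ`, where `N_Γ = {n(bᵢ,bⱼ) = m_{bⱼ}·m_{bᵢ∨bⱼ−bⱼ} : bᵢ ≺ bⱼ in Γ}`. -/
def N2set {d : ℕ} (c α : ℕ) (B : AddSubmonoid (Fin d → ℕ))
    (m : (Fin d → ℕ) → (Fin (c + d) →₀ ℕ)) : Set (Fin (c + d) →₀ ℕ) :=
  {n | ∃ Γ, IsClass B α Γ ∧ ∃ bi ∈ Γ, ∃ bj ∈ Γ, ltCls bi bj ∧ n = m bj + m (joinSub bi bj)}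

/-- `σ` is the exponent vector of the initial (i.e. `≺`-largest) term of `f`. -/
def IsLeadMon {N : ℕ} {K : Type*} [Field K] (f : MvPolynomial (Fin N) K)
    (σ : Fin N →₀ ℕ) : Prop :=
  σ ∈ f.support ∧ ∀ τ ∈ f.support, τ = σ ∨ grevlex τ σ

/-- the initial ideal of `I` with respect to the graded reverse lexicographic order. -/
noncomputable def initialIdeal {N : ℕ} {K : Type*} [Field K] (I : Ideal (MvPolynomial (Fin N) K)) :
    Ideal (MvPolynomial (Fin N) K) :=
  Ideal.span {g | ∃ f ∈ I, ∃ σ, IsLeadMon f σ ∧ g = MvPolynomial.monomial σ (1 : K)}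

set_option maxHeartbeats 1000000
variable {N : ℕ}

lemma degE_add (σ τ : Fin N →₀ ℕ) : degE (σ + τ) = degE σ + degE τ := by
  simp [degE, Finset.sum_add_distrib]

lemma grevlex_asymm {σ τ : Fin N →₀ ℕ} (h : grevlex σ τ) (h' : grevlex τ σ) : False := by
  rcases h with h | ⟨hd, k, hk, hl⟩
  · rcases h' with h' | ⟨hd', _⟩ <;> omega
  · rcases h' with h' | ⟨hd', k', hk', hl'⟩
    · omega
    · rcases lt_trichotomy k k' with h1 | h1 | h1
      · have := hl k' h1; omega
      · subst h1; omega
      · have := hl' k h1; omega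

lemma grevlex_irrefl (σ : Fin N →₀ ℕ) : ¬ grevlex σ σ := fun h => grevlex_asymm h h

lemma grevlex_add_right {σ τ : Fin N →₀ ℕ} (h : grevlex σ τ) (ρ : Fin N →₀ ℕ) :
    grevlex (σ + ρ) (τ + ρ) := by
  rcases h with h | ⟨hd, k, hk, hl⟩
  · left; rw [degE_add, degE_add]; omega
  · right
    refine ⟨by rw [degE_add, degE_add, hd], k, by simp only [Finsupp.add_apply]; omega,
      fun l hl' => by simp only [Finsupp.add_apply]; rw [hl l hl']⟩

lemma valE_add (c d α : ℕ) (a : Fin c → Fin d → ℕ) (σ τ : Fin (c + d) →₀ ℕ) :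
    valE c d α a (σ + τ) = valE c d α a σ + valE c d α a τ := by
  simp [valE, add_smul, Finset.sum_add_distrib]

lemma valE_zero (c d α : ℕ) (a : Fin c → Fin d → ℕ) : valE c d α a 0 = 0 := by simp [valE]

lemma valE_single (c d α : ℕ) (a : Fin c → Fin d → ℕ) (v : Fin (c + d)) (k : ℕ) :
    valE c d α a (Finsupp.single v k) = k • gens c d α a v := by
  rw [valE, Finset.sum_eq_single v]
  · simp
  · intro w _ hw; simp [Finsupp.single_apply, Ne.symm hw]
  · simp

lemma gens_mem (c d α : ℕ) (a : Fin c → Fin d → ℕ) (B : AddSubmonoid (Fin d → ℕ))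
    (hBgen : B = AddSubmonoid.closure (Set.range a ∪ Set.range (eVec d α)))
    (v : Fin (c + d)) : gens c d α a v ∈ B := by
  subst hBgen
  refine Fin.addCases (fun i => ?_) (fun j => ?_) v
  · rw [gens, Fin.addCases_left]
    exact AddSubmonoid.subset_closure (Or.inl ⟨i, rfl⟩)
  · rw [gens, Fin.addCases_right]
    exact AddSubmonoid.subset_closure (Or.inr ⟨j, rfl⟩)

lemma valE_mem (c d α : ℕ) (a : Fin c → Fin d → ℕ) (B : AddSubmonoid (Fin d → ℕ))
    (hBgen : B = AddSubmonoid.closure (Set.range a ∪ Set.range (eVec d α)))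
    (σ : Fin (c + d) →₀ ℕ) : valE c d α a σ ∈ B :=
  AddSubmonoid.sum_mem _ fun v _ => AddSubmonoid.nsmul_mem _ (gens_mem c d α a B hBgen v) _

variable (c d α : ℕ) (a : Fin c → Fin d → ℕ) (K : Type*) [Field K]
  (π : MvPolynomial (Fin (c + d)) K →ₐ[K] AddMonoidAlgebra K (Fin d → ℕ))
  (hπ : ∀ v, π (MvPolynomial.X v) = AddMonoidAlgebra.of' K (Fin d → ℕ) (gens c d α a v))

include hπ in
lemma pi_monomial (σ : Fin (c + d) →₀ ℕ) (r : K) :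
    π (MvPolynomial.monomial σ r) = AddMonoidAlgebra.single (valE c d α a σ) r := by
  induction σ using Finsupp.induction with
  | zero =>
    rw [MvPolynomial.monomial_zero', valE_zero]
    show π (algebraMap K _ r) = _
    rw [AlgHom.commutes]; rfl
  | single_add v k τ hv hk ih =>
    have : (MvPolynomial.monomial (Finsupp.single v k + τ)) r
        = MvPolynomial.monomial (Finsupp.single v k) (1 : K) * MvPolynomial.monomial τ r := by
      rw [MvPolynomial.monomial_mul, one_mul]
    rw [this, map_mul, ih, ← MvPolynomial.X_pow_eq_monomial, map_pow, hπ,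
      AddMonoidAlgebra.of'_apply, AddMonoidAlgebra.single_pow,
      AddMonoidAlgebra.single_mul_single, one_pow, one_mul, valE_add, valE_single]

include hπ in
lemma cancel_lemma (f : MvPolynomial (Fin (c + d)) K) (hf : π f = 0)
    (σ : Fin (c + d) →₀ ℕ) (hσ : σ ∈ f.support) :
    ∃ τ ∈ f.support, τ ≠ σ ∧ valE c d α a τ = valE c d α a σ := by
  by_contra hcon
  push_neg at hcon
  have hrep := MvPolynomial.support_sum_monomial_coeff f
  have h0 : (0 : AddMonoidAlgebra K (Fin d → ℕ)) = ∑ τ ∈ f.support,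
      AddMonoidAlgebra.single (valE c d α a τ) (MvPolynomial.coeff τ f) := by
    rw [← hf]
    conv_lhs => rw [← hrep]
    rw [map_sum]
    exact Finset.sum_congr rfl fun τ _ => pi_monomial c d α a K π hπ τ _
  have h1 := congrArg (fun g : AddMonoidAlgebra K (Fin d → ℕ) => g.coeff (valE c d α a σ)) h0
  simp only [AddMonoidAlgebra.coeff_zero, AddMonoidAlgebra.coeff_sum, AddMonoidAlgebra.coeff_single, Finsupp.coe_zero, Pi.zero_apply] at h1
  rw [Finsupp.finset_sum_apply] at h1
  rw [Finset.sum_eq_single σ] at h1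
  · rw [Finsupp.single_apply, if_pos rfl] at h1
    exact (MvPolynomial.mem_support_iff.mp hσ) h1.symm
  · intro τ hτ hne
    have := hcon τ hτ hne
    rw [Finsupp.single_apply, if_neg this]
  · intro h; exact absurd hσ h

include hπ in
lemma initial_not_min (B : AddSubmonoid (Fin d → ℕ))
    (hBgen : B = AddSubmonoid.closure (Set.range a ∪ Set.range (eVec d α)))
    (m : (Fin d → ℕ) → (Fin (c + d) →₀ ℕ))
    (hmmin : ∀ b ∈ B, ∀ σ, valE c d α a σ = b → m b = σ ∨ grevlex (m b) σ)
    (w : Fin (c + d) →₀ ℕ)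
    (hw : MvPolynomial.monomial w (1 : K) ∈ initialIdeal (RingHom.ker π.toRingHom)) :
    m (valE c d α a w) ≠ w := by
  classical
  have hset : {g | ∃ f ∈ RingHom.ker π.toRingHom, ∃ σ, IsLeadMon f σ
        ∧ g = MvPolynomial.monomial σ (1 : K)}
      = (fun s => MvPolynomial.monomial s (1 : K)) ''
        {σ | ∃ f ∈ RingHom.ker π.toRingHom, IsLeadMon f σ} := by
    ext g
    constructor
    · rintro ⟨f, hf, σ, hlead, rfl⟩; exact ⟨σ, ⟨f, hf, hlead⟩, rfl⟩
    · rintro ⟨σ, ⟨f, hf, hlead⟩, rfl⟩; exact ⟨f, hf, σ, hlead, rfl⟩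
  rw [initialIdeal, hset] at hw
  have hdvd := MvPolynomial.mem_ideal_span_monomial_image.mp hw w (by
    rw [MvPolynomial.support_monomial, if_neg one_ne_zero]; exact Finset.mem_singleton_self w)
  obtain ⟨σ, ⟨f, hfker, hlead⟩, hle⟩ := hdvd
  obtain ⟨ρ, hρ⟩ := le_iff_exists_add.mp hle
  have hf0 : π f = 0 := hfker
  obtain ⟨τ, hτ, hτne, hτval⟩ := cancel_lemma c d α a K π hπ f hf0 σ hlead.1
  have hgl : grevlex τ σ := (hlead.2 τ hτ).resolve_left hτne
  have hgl' : grevlex (τ + ρ) w := by rw [hρ]; exact grevlex_add_right hgl ρ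
  have hval : valE c d α a (τ + ρ) = valE c d α a w := by
    rw [hρ, valE_add, valE_add, hτval]
  intro hmw
  rcases hmmin (valE c d α a w) (valE_mem c d α a B hBgen w) (τ + ρ) hval with h | h
  · rw [hmw] at h; rw [← h] at hgl'; exact grevlex_irrefl w hgl'
  · rw [hmw] at h; exact grevlex_asymm hgl' h


end SimplicialToric

open SimplicialToric

/-- For `N₀ ⊆ N₁ ∪ N₂` an antichain under divisibility generating
`in_≺(ker π)`, the binomials `g_n = n − m_b` (`b` the element of `B` represented by `n`)
form the reduced Gröbner basis of `ker π`. -/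
theorem reduced_groebner_basis
    (c d α : ℕ) (hα : 0 < α)
    (a : Fin c → Fin d → ℕ) (B : AddSubmonoid (Fin d → ℕ))
    (hBgen : B = AddSubmonoid.closure (Set.range a ∪ Set.range (eVec d α)))
    (hhilb : Hilb B = Set.range a ∪ Set.range (eVec d α))
    (hdeg : ∀ i, ∑ j, a i j = α)
    (m : (Fin d → ℕ) → (Fin (c + d) →₀ ℕ))
    (hmval : ∀ b ∈ B, valE c d α a (m b) = b)
    (hmmin : ∀ b ∈ B, ∀ σ, valE c d α a σ = b → m b = σ ∨ grevlex (m b) σ)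
    (K : Type*) [Field K]
    (π : MvPolynomial (Fin (c + d)) K →ₐ[K] AddMonoidAlgebra K (Fin d → ℕ))
    (hπ : ∀ v, π (MvPolynomial.X v) = AddMonoidAlgebra.of' K (Fin d → ℕ) (gens c d α a v))
    (N0 : Set (Fin (c + d) →₀ ℕ)) (hN0fin : N0.Finite)
    (hN0sub : N0 ⊆ N1set c d α a B m ∪ N2set c α B m)
    (hanti : ∀ n₁ ∈ N0, ∀ n₂ ∈ N0, n₁ ≠ n₂ → ¬ ∃ ρ, n₂ = n₁ + ρ)
    (hN0gen : initialIdeal (RingHom.ker π.toRingHom)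
      = Ideal.span ((fun n => MvPolynomial.monomial n (1 : K)) '' N0))
    (gfun : (Fin (c + d) →₀ ℕ) → MvPolynomial (Fin (c + d)) K)
    (hg : ∀ n, gfun n
      = MvPolynomial.monomial n (1 : K) - MvPolynomial.monomial (m (valE c d α a n)) (1 : K)) :
    (∀ n ∈ N0, gfun n ∈ RingHom.ker π.toRingHom) ∧
    (∀ n ∈ N0, IsLeadMon (gfun n) n ∧ MvPolynomial.coeff n (gfun n) = 1) ∧
    initialIdeal (RingHom.ker π.toRingHom)
      = Ideal.span {h | ∃ n ∈ N0, ∃ σ, IsLeadMon (gfun n) σ ∧ h = MvPolynomial.monomial σ (1 : K)} ∧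
    (∀ n ∈ N0, ∀ n' ∈ N0, n' ≠ n → ∀ σ ∈ (gfun n').support, ¬ ∃ ρ, σ = n + ρ) := by
  classical
  have hvalmem : ∀ σ, valE c d α a σ ∈ B := valE_mem c d α a B hBgen
  have hnotmin : ∀ n ∈ N0, m (valE c d α a n) ≠ n := by
    intro n hn
    apply initial_not_min c d α a K π hπ B hBgen m hmmin
    rw [hN0gen]
    exact Ideal.subset_span ⟨n, hn, rfl⟩
  have part1 : ∀ n ∈ N0, gfun n ∈ RingHom.ker π.toRingHom := by
    intro n hn
    show π (gfun n) = 0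
    have h1 : valE c d α a (m (valE c d α a n)) = valE c d α a n := hmval _ (hvalmem n)
    rw [hg, map_sub, pi_monomial c d α a K π hπ, pi_monomial c d α a K π hπ, h1, sub_self]
  have hcoeff : ∀ n ∈ N0, MvPolynomial.coeff n (gfun n) = 1 := by
    intro n hn
    rw [hg, MvPolynomial.coeff_sub, MvPolynomial.coeff_monomial, MvPolynomial.coeff_monomial,
      if_pos rfl, if_neg (hnotmin n hn), sub_zero]
  have hsupp : ∀ n ∈ N0, ∀ τ ∈ (gfun n).support, τ = n ∨ τ = m (valE c d α a n) := by
    intro n hn τ hτ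
    by_contra hcon
    push_neg at hcon
    apply MvPolynomial.mem_support_iff.mp hτ
    rw [hg, MvPolynomial.coeff_sub, MvPolynomial.coeff_monomial, MvPolynomial.coeff_monomial,
      if_neg (Ne.symm hcon.1), if_neg (Ne.symm hcon.2), sub_zero]
  have part2 : ∀ n ∈ N0, IsLeadMon (gfun n) n ∧ MvPolynomial.coeff n (gfun n) = 1 := by
    intro n hn
    refine ⟨⟨MvPolynomial.mem_support_iff.mpr (by rw [hcoeff n hn]; exact one_ne_zero), ?_⟩,
      hcoeff n hn⟩
    intro τ hτ
    rcases hsupp n hn τ hτ with rfl | rfl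
    · exact Or.inl rfl
    · rcases hmmin (valE c d α a n) (hvalmem n) n rfl with h | h
      · exact absurd h (hnotmin n hn)
      · exact Or.inr h
  have hunique : ∀ (f : MvPolynomial (Fin (c + d)) K) σ σ',
      IsLeadMon f σ → IsLeadMon f σ' → σ = σ' := by
    intro f σ σ' h h'
    rcases h'.2 σ h.1 with he | hg1
    · exact he
    · rcases h.2 σ' h'.1 with he | hg2
      · exact he.symm
      · exact absurd hg2 fun hg2 => grevlex_asymm hg1 hg2
  have part3 : initialIdeal (RingHom.ker π.toRingHom)
      = Ideal.span {h | ∃ n ∈ N0, ∃ σ, IsLeadMon (gfun n) σ ∧ h = MvPolynomial.monomial σ (1 : K)} := by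
    rw [hN0gen]
    congr 1
    ext h
    constructor
    · rintro ⟨n, hn, rfl⟩
      exact ⟨n, hn, n, (part2 n hn).1, rfl⟩
    · rintro ⟨n, hn, σ, hl, rfl⟩
      have := hunique _ _ _ hl (part2 n hn).1
      exact ⟨n, hn, by rw [this]⟩
  refine ⟨part1, part2, part3, ?_⟩
  intro n hn n' hn' hne σ hσ
  rintro ⟨ρ, rfl⟩
  rcases hsupp n' hn' _ hσ with h | h
  · exact hanti n hn n' hn' (Ne.symm hne) ⟨ρ, h.symm⟩
  · have hmem : MvPolynomial.monomial (n + ρ) (1 : K)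
        ∈ initialIdeal (RingHom.ker π.toRingHom) := by
      rw [hN0gen,
        show MvPolynomial.monomial (n + ρ) (1 : K)
          = MvPolynomial.monomial n (1 : K) * MvPolynomial.monomial ρ (1 : K) from by
          rw [MvPolynomial.monomial_mul, one_mul]]
      exact Ideal.mul_mem_right _ _ (Ideal.subset_span ⟨n, hn, rfl⟩)
    have hnm := initial_not_min c d α a K π hπ B hBgen m hmmin _ hmem
    have hv : valE c d α a (n + ρ) = valE c d α a n' := by rw [h, hmval _ (hvalmem n')]
    exact hnm (by rw [hv, ← h])
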